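/- Let β ∈ (0,1], λ > 0, μ > 0, ρ > 0, t > 0, n ∈ ℤ₊, and assume λ < μ^β. Then the probability mass function of the fractional negative binomial process, obtained by integrating the fractional Poisson pmf against the gamma density, satisfies ∫₀^∞ p_β(n|y,λ) f_G(y,t) dy = (λ^n/n!) · ∑_{k=0}^∞ ((n+k)!/(μ^{β(n+k)} k!)) · Γ((n+k)β + ρt) (−λ)^k / (Γ(ρt) Γ(β(k+n)+1)). -/

import Mathlib

open Real

/-- pmf of the fractional Poisson process. -/
noncomputable def fracPoissonPMF (β lam t : ℝ) (n : ℕ) : ℝ :=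
  (lam * t ^ β) ^ n / n.factorial *
    ∑' k : ℕ, ((n + k).factorial / k.factorial : ℝ) * (-(lam * t ^ β)) ^ k /
      Real.Gamma (β * ((k : ℝ) + n) + 1)

/-- density of the gamma subordinator `Γ(t) ∼ G(μ, ρt)`. -/
noncomputable def gammaDensity (μ ρ t x : ℝ) : ℝ :=
  μ ^ (ρ * t) / Real.Gamma (ρ * t) * x ^ (ρ * t - 1) * Real.exp (-(μ * x))

set_option maxHeartbeats 1000000
open MeasureTheory Set

lemma integrableOn_aux {a r : ℝ} (ha : 0 < a) (hr : 0 < r) :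
    MeasureTheory.IntegrableOn (fun y : ℝ => y ^ (a-1) * Real.exp (-(r*y))) (Set.Ioi 0) := by
  have h := integrableOn_rpow_mul_exp_neg_mul_rpow (p := 1) (s := a-1) (b := r)
    (by linarith) one_pos hr
  refine h.congr_fun (fun x hx => ?_) measurableSet_Ioi
  beta_reduce
  rw [Real.rpow_one, neg_mul]

lemma fact_le_aux (n j : ℕ) : (n+j).factorial ≤ (n+j)^n * j.factorial := by
  induction n with
  | zero => simp
  | succ n ih =>
    rw [show n+1+j = n+j+1 from by omega, Nat.factorial_succ]
    calc (n+j+1) * (n+j).factorial ≤ (n+j+1) * ((n+j)^n * j.factorial) :=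
          Nat.mul_le_mul_left _ ih
      _ ≤ (n+j+1) * ((n+j+1)^n * j.factorial) :=
          Nat.mul_le_mul_left _ (Nat.mul_le_mul_right _ (Nat.pow_le_pow_left (by omega) n))
      _ = (n+j+1)^(n+1) * j.factorial := by ring

lemma gamma_prod (s : ℝ) (hs : 0 < s) (m : ℕ) :
    Real.Gamma (s + m) = Real.Gamma s * ∏ j ∈ Finset.range m, (s + j) := by
  induction m with
  | zero => simp
  | succ m ih =>
    have h1 : s + (m+1 : ℕ) = (s + m) + 1 := by push_cast; ring
    rw [h1, Real.Gamma_add_one (by positivity), ih, Finset.prod_range_succ]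
    ring

lemma summable_core (β c r : ℝ) (hβ : 0 < β) (hβ1 : β ≤ 1) (hc : 0 < c)
    (hr0 : 0 < r) (hr : r < 1) (n : ℕ) :
    Summable fun k : ℕ => ((n+k).factorial / k.factorial : ℝ) *
      Real.Gamma (β*((n:ℝ)+k)+c) / Real.Gamma (β*((n:ℝ)+k)+1) * r^k := by
  set m : ℕ := ⌈c⌉₊ with hm
  set K : ℕ := ⌈2/β⌉₊ with hK
  have hKβ : (2:ℝ) ≤ β * K := by
    have : (2/β : ℝ) ≤ K := Nat.le_ceil _
    calc (2:ℝ) = β * (2/β) := by field_simp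
      _ ≤ β * K := by gcongr
  have hcm : c ≤ m := Nat.le_ceil _
  rw [← summable_nat_add_iff K]
  set D : ℝ := ((n+K+1:ℕ):ℝ)^n * ((n+K+m+2:ℕ):ℝ)^m * r^K / r with hD
  have hgeo : Summable fun k : ℕ => D * (((k+1:ℕ):ℝ)^(n+m) * r^(k+1)) := by
    refine Summable.mul_left D ?_
    exact (summable_nat_add_iff (f := fun k : ℕ => ((k:ℕ):ℝ)^(n+m) * r^k) 1).2
      (summable_pow_mul_geometric_of_norm_lt_one (n+m)
        (by rwa [Real.norm_eq_abs, abs_of_pos hr0]))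
  refine Summable.of_nonneg_of_le (fun k => ?_) (fun k => ?_) hgeo
  · have h1 : (0:ℝ) < Real.Gamma (β*((n:ℝ)+(k+K))+1) := Real.Gamma_pos_of_pos (by positivity)
    have h2 : (0:ℝ) < Real.Gamma (β*((n:ℝ)+(k+K))+c) := Real.Gamma_pos_of_pos (by positivity)
    positivity
  · set x : ℝ := β*((n:ℝ)+((k+K:ℕ):ℝ)) with hx
    have hx2 : (2:ℝ) ≤ x := by
      have : β * K ≤ x := by
        rw [hx]; push_cast
        have : (K:ℝ) ≤ (n:ℝ)+(k+K) := by push_cast; linarith [Nat.cast_nonneg (α := ℝ) n, Nat.cast_nonneg (α := ℝ) k]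
        nlinarith
      linarith
    have hΓ1 : (0:ℝ) < Real.Gamma (x+1) := Real.Gamma_pos_of_pos (by positivity)
    -- step: Gamma (x+c) ≤ Gamma (x+1+m)
    have hmono : Real.Gamma (x+c) ≤ Real.Gamma (x+1+(m:ℝ)) := by
      refine Real.Gamma_strictMonoOn_Ici.monotoneOn ?_ ?_ (by linarith)
      · simp only [Set.mem_Ici]; linarith
      · simp only [Set.mem_Ici]; linarith
    have hprod : Real.Gamma (x+1+(m:ℝ)) ≤ Real.Gamma (x+1) * (x+1+m)^m := by
      rw [show x+1+(m:ℝ) = (x+1) + (m:ℕ) by push_cast; ring,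
        gamma_prod (x+1) (by positivity) m]
      gcongr
      calc ∏ j ∈ Finset.range m, (x+1+(j:ℝ)) ≤ ∏ j ∈ Finset.range m, (x+1+(m:ℝ)) := by
            refine Finset.prod_le_prod (fun i _ => by positivity) (fun i hi => ?_)
            have := Finset.mem_range.1 hi
            have : (i:ℝ) ≤ m := by exact_mod_cast this.le
            linarith
        _ = (x+1+(m:ℝ))^m := by rw [Finset.prod_const, Finset.card_range]
    have hfact : ((n+(k+K)).factorial : ℝ) ≤ ((n+(k+K):ℕ):ℝ)^n * (k+K).factorial := by
      exact_mod_cast fact_le_aux n (k+K)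
    have hkfpos : (0:ℝ) < (k+K).factorial := by exact_mod_cast Nat.factorial_pos _
    -- combine
    have hb1 : ((n+(k+K)).factorial / (k+K).factorial : ℝ) ≤ ((n+K+1:ℕ):ℝ)^n * ((k+1:ℕ):ℝ)^n := by
      rw [div_le_iff₀ hkfpos]
      calc ((n+(k+K)).factorial : ℝ) ≤ ((n+(k+K):ℕ):ℝ)^n * (k+K).factorial := hfact
        _ ≤ (((n+K+1:ℕ):ℝ)^n * ((k+1:ℕ):ℝ)^n) * (k+K).factorial := by
            gcongr
            rw [← mul_pow]
            refine pow_le_pow_left₀ (by positivity) ?_ n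
            push_cast; nlinarith [Nat.cast_nonneg (α := ℝ) n, Nat.cast_nonneg (α := ℝ) k, Nat.cast_nonneg (α := ℝ) K]
    have hb2 : (x+1+(m:ℝ))^m ≤ ((n+K+m+2:ℕ):ℝ)^m * ((k+1:ℕ):ℝ)^m := by
      rw [← mul_pow]
      refine pow_le_pow_left₀ (by positivity) ?_ m
      have hxle : x ≤ (n:ℝ)+((k+K:ℕ):ℝ) := by
        rw [hx]
        nlinarith [Nat.cast_nonneg (α := ℝ) n, Nat.cast_nonneg (α := ℝ) (k+K)]
      push_cast
      push_cast at hxle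
      nlinarith [Nat.cast_nonneg (α := ℝ) n, Nat.cast_nonneg (α := ℝ) k, Nat.cast_nonneg (α := ℝ) K, Nat.cast_nonneg (α := ℝ) m]
    have hΓratio : Real.Gamma (x+c) / Real.Gamma (x+1) ≤ (x+1+(m:ℝ))^m := by
      rw [div_le_iff₀ hΓ1]
      calc Real.Gamma (x+c) ≤ Real.Gamma (x+1+(m:ℝ)) := hmono
        _ ≤ Real.Gamma (x+1) * (x+1+m)^m := hprod
        _ = (x+1+(m:ℝ))^m * Real.Gamma (x+1) := by ring
    have hΓc : (0:ℝ) < Real.Gamma (x+c) := Real.Gamma_pos_of_pos (by positivity)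
    have hfnn : (0:ℝ) ≤ ((n+(k+K)).factorial / (k+K).factorial : ℝ) := by positivity
    calc ((n+(k+K)).factorial / (k+K).factorial : ℝ) * Real.Gamma (x+c) / Real.Gamma (x+1) * r^(k+K)
        = (((n+(k+K)).factorial / (k+K).factorial : ℝ)) * (Real.Gamma (x+c) / Real.Gamma (x+1)) * r^(k+K) := by ring
      _ ≤ (((n+K+1:ℕ):ℝ)^n * ((k+1:ℕ):ℝ)^n) * ((x+1+(m:ℝ))^m) * r^(k+K) := by
          have hrk : (0:ℝ) ≤ r^(k+K) := by positivity
          refine mul_le_mul_of_nonneg_right (mul_le_mul hb1 hΓratio (by positivity) (by positivity)) hrk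
      _ ≤ (((n+K+1:ℕ):ℝ)^n * ((k+1:ℕ):ℝ)^n) * (((n+K+m+2:ℕ):ℝ)^m * ((k+1:ℕ):ℝ)^m) * r^(k+K) := by
          have hrk : (0:ℝ) ≤ r^(k+K) := by positivity
          refine mul_le_mul_of_nonneg_right (mul_le_mul_of_nonneg_left hb2 (by positivity)) hrk
      _ = D * (((k+1:ℕ):ℝ)^(n+m) * r^(k+1)) := by
          rw [hD]
          field_simp
          ring


theorem fnbp_pmf (β lam μ ρ t : ℝ) (n : ℕ) (hβ : β ∈ Set.Ioc (0 : ℝ) 1)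
    (hlam : 0 < lam) (hμ : 0 < μ) (hρ : 0 < ρ) (ht : 0 < t)
    (hlamμ : lam < μ ^ β) :
    ∫ y in Set.Ioi (0 : ℝ), fracPoissonPMF β lam y n * gammaDensity μ ρ t y
      = lam ^ n / n.factorial *
          ∑' k : ℕ, ((n + k).factorial : ℝ) / (μ ^ (β * ((n : ℝ) + k)) * k.factorial) *
            (Real.Gamma (((n : ℝ) + k) * β + ρ * t) * (-lam) ^ k /
              (Real.Gamma (ρ * t) * Real.Gamma (β * ((k : ℝ) + n) + 1))) := by
  obtain ⟨hβ0, hβ1⟩ := hβ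
  set C : ℕ → ℝ := fun k => lam ^ n / n.factorial *
      (((n + k).factorial / k.factorial : ℝ) * (-lam) ^ k / Real.Gamma (β * ((k : ℝ) + n) + 1)) *
      (μ ^ (ρ * t) / Real.Gamma (ρ * t)) with hC
  set a : ℕ → ℝ := fun k => β * ((n : ℝ) + k) + ρ * t with ha
  have hapos : ∀ k : ℕ, 0 < a k := fun k => by
    have : (0:ℝ) ≤ (n:ℝ) + k := by positivity
    have : 0 < ρ * t := by positivity
    simp only [ha]; nlinarith
  set g : ℕ → ℝ → ℝ := fun k y => C k * (y ^ (a k - 1) * Real.exp (-(μ * y))) with hg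
  -- step 1 : pointwise identity
  have step1 : ∀ y ∈ Ioi (0:ℝ),
      fracPoissonPMF β lam y n * gammaDensity μ ρ t y = ∑' k, g k y := by
    intro y hy
    have hy0 : (0:ℝ) < y := hy
    rw [fracPoissonPMF, gammaDensity]
    calc ((lam * y ^ β) ^ n / n.factorial *
          ∑' k : ℕ, ((n + k).factorial / k.factorial : ℝ) * (-(lam * y ^ β)) ^ k /
            Real.Gamma (β * ((k : ℝ) + n) + 1)) *
          (μ ^ (ρ * t) / Real.Gamma (ρ * t) * y ^ (ρ * t - 1) * Real.exp (-(μ * y)))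
        = ∑' k : ℕ, ((lam * y ^ β) ^ n / n.factorial *
            (((n + k).factorial / k.factorial : ℝ) * (-(lam * y ^ β)) ^ k /
              Real.Gamma (β * ((k : ℝ) + n) + 1)) *
            (μ ^ (ρ * t) / Real.Gamma (ρ * t) * y ^ (ρ * t - 1) * Real.exp (-(μ * y)))) := by
          rw [tsum_mul_right, tsum_mul_left]
      _ = ∑' k, g k y := by
          refine tsum_congr fun k => ?_
          have hyβ : ∀ m : ℕ, ((y ^ β) ^ m : ℝ) = y ^ (β * (m:ℝ)) := fun m => by
            rw [Real.rpow_mul hy0.le, Real.rpow_natCast]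
          rw [hg]
          simp only [hC, ha]
          rw [show -(lam * y ^ β) = (-lam) * (y ^ β) by ring, mul_pow (-lam), mul_pow lam,
            hyβ n, hyβ k,
            show β * ((n:ℝ) + k) + ρ * t - 1 = β * (n:ℝ) + (β * (k:ℝ) + (ρ * t - 1)) by ring,
            Real.rpow_add hy0, Real.rpow_add hy0]
          ring
  rw [setIntegral_congr_fun measurableSet_Ioi step1]
  -- integrability of each term
  have hint : ∀ k : ℕ, IntegrableOn (g k) (Ioi 0) := by
    intro k
    exact (integrableOn_aux (hapos k) hμ).const_mul (C k)
  -- value of each integral of the positive part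
  have hval : ∀ k : ℕ, ∫ y in Ioi (0:ℝ), y ^ (a k - 1) * Real.exp (-(μ * y))
      = (1/μ) ^ (a k) * Real.Gamma (a k) := fun k =>
    integral_rpow_mul_exp_neg_mul_Ioi (hapos k) hμ
  -- norm integrals
  have hnorm : ∀ k : ℕ, ∫ y in Ioi (0:ℝ), ‖g k y‖
      = |C k| * ((1/μ) ^ (a k) * Real.Gamma (a k)) := by
    intro k
    rw [← hval k, ← MeasureTheory.integral_const_mul]
    refine setIntegral_congr_fun measurableSet_Ioi fun y hy => ?_
    have hy0 : (0:ℝ) < y := hy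
    have h1 : (0:ℝ) ≤ y ^ (a k - 1) * Real.exp (-(μ * y)) := by positivity
    rw [hg]
    simp only [Real.norm_eq_abs, abs_mul, abs_of_nonneg h1]
  -- positivity facts
  have hΓρ : (0:ℝ) < Real.Gamma (ρ * t) := Real.Gamma_pos_of_pos (by positivity)
  have hΓ1 : ∀ k : ℕ, (0:ℝ) < Real.Gamma (β * ((k:ℝ) + n) + 1) := fun k =>
    Real.Gamma_pos_of_pos (by positivity)
  have hCabs : ∀ k : ℕ, |C k| = lam ^ n / n.factorial *
      (((n + k).factorial / k.factorial : ℝ) * lam ^ k / Real.Gamma (β * ((k : ℝ) + n) + 1)) *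
      (μ ^ (ρ * t) / Real.Gamma (ρ * t)) := by
    intro k
    rw [hC]
    simp only [abs_mul, abs_div, abs_pow, abs_neg]
    rw [abs_of_pos hlam, abs_of_pos (hΓ1 k), abs_of_pos hΓρ,
      abs_of_nonneg (show (0:ℝ) ≤ ((n+k).factorial:ℝ) by positivity),
      abs_of_nonneg (show (0:ℝ) ≤ (k.factorial:ℝ) by positivity),
      abs_of_nonneg (show (0:ℝ) ≤ (n.factorial:ℝ) by positivity),
      abs_of_pos (Real.rpow_pos_of_pos hμ (ρ*t))]
  -- summability of norm integrals
  set r : ℝ := lam * μ ^ (-β) with hr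
  have hr0 : 0 < r := by
    have : (0:ℝ) < μ ^ (-β) := Real.rpow_pos_of_pos hμ _
    positivity
  have hrlt : r < 1 := by
    rw [hr, Real.rpow_neg hμ.le, mul_inv_lt_iff₀ (Real.rpow_pos_of_pos hμ β), one_mul]
    exact hlamμ
  have hcore := summable_core β (ρ * t) r hβ0 hβ1 (by positivity) hr0 hrlt n
  set E : ℝ := lam ^ n / n.factorial * (μ ^ (ρ * t) / Real.Gamma (ρ * t)) *
      μ ^ (-(β * (n:ℝ)) - ρ * t) with hE
  have hSeq : ∀ k : ℕ, |C k| * ((1/μ) ^ (a k) * Real.Gamma (a k))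
      = E * (((n + k).factorial / k.factorial : ℝ) *
          Real.Gamma (β * ((n:ℝ) + k) + ρ * t) / Real.Gamma (β * ((n:ℝ) + k) + 1) * r ^ k) := by
    intro k
    rw [hCabs k, show β * ((k:ℝ) + n) + 1 = β * ((n:ℝ) + k) + 1 by ring]
    have h1 : ((1:ℝ)/μ) ^ (a k) = μ ^ (-(β * (n:ℝ)) - ρ * t) * μ ^ (-β * (k:ℝ)) := by
      rw [one_div, Real.inv_rpow hμ.le, ← Real.rpow_neg hμ.le,
        show -(a k) = (-(β * (n:ℝ)) - ρ * t) + (-β * (k:ℝ)) by simp only [ha]; ring,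
        Real.rpow_add hμ]
    have h2 : r ^ k = lam ^ k * μ ^ (-β * (k:ℝ)) := by
      rw [hr, mul_pow, ← Real.rpow_natCast (μ ^ (-β)) k, ← Real.rpow_mul hμ.le]
    have h3 : Real.Gamma (a k) = Real.Gamma (β * ((n:ℝ) + k) + ρ * t) := by simp only [ha]
    rw [h1, h2, h3, hE]
    ring
  have hS' : Summable fun k : ℕ => |C k| * ((1/μ) ^ (a k) * Real.Gamma (a k)) :=
    Summable.congr (hcore.mul_left E) fun k => (hSeq k).symm
  have hmeas : ∀ k : ℕ, AEStronglyMeasurable (g k) (volume.restrict (Ioi 0)) := fun k =>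
    (hint k).aestronglyMeasurable
  have hfin : ∑' k : ℕ, ∫⁻ y in Ioi (0:ℝ), ‖g k y‖₊ ≠ ⊤ := by
    have heq : ∀ k : ℕ, ∫⁻ y in Ioi (0:ℝ), ‖g k y‖₊
        = ENNReal.ofReal (|C k| * ((1/μ) ^ (a k) * Real.Gamma (a k))) := by
      intro k
      have := ofReal_integral_norm_eq_lintegral_enorm (hint k); rw [hnorm k] at this; exact this.symm
    have hnn : ∀ k : ℕ, 0 ≤ |C k| * ((1/μ) ^ (a k) * Real.Gamma (a k)) := fun k =>
      mul_nonneg (abs_nonneg _) (mul_nonneg (Real.rpow_nonneg (by positivity) _)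
        (Real.Gamma_pos_of_pos (hapos k)).le)
    rw [tsum_congr heq, ← ENNReal.ofReal_tsum_of_nonneg hnn hS']
    exact ENNReal.ofReal_ne_top
  rw [integral_tsum hmeas hfin, ← tsum_mul_left]
  refine tsum_congr fun k => ?_
  have hik : ∫ y in Ioi (0:ℝ), g k y = C k * ((1/μ) ^ (a k) * Real.Gamma (a k)) := by
    rw [hg]
    simp only
    rw [MeasureTheory.integral_const_mul, hval k]
  rw [hik, hC]
  simp only [ha]
  rw [show ((n:ℝ) + k) * β + ρ * t = β * ((n:ℝ) + k) + ρ * t by ring,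
    one_div, Real.inv_rpow hμ.le, Real.rpow_add hμ]
  have hne1 : Real.Gamma (β * ((k:ℝ) + n) + 1) ≠ 0 := (hΓ1 k).ne'
  have hne2 : Real.Gamma (ρ * t) ≠ 0 := hΓρ.ne'
  have hne3 : (n.factorial : ℝ) ≠ 0 := by positivity
  have hne4 : (k.factorial : ℝ) ≠ 0 := by positivity
  have hne5 : μ ^ (β * ((n:ℝ) + k)) ≠ 0 := (Real.rpow_pos_of_pos hμ _).ne'
  have hne6 : μ ^ (ρ * t) ≠ 0 := (Real.rpow_pos_of_pos hμ _).ne'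
  field_simp
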